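/- Let n ≥ 6. If T is a tree on n vertices not isomorphic to the star K_{1,n-1}, then there exist two leaves u and v of T such that the tree obtained by deleting u and v from T is not isomorphic to the star K_{1,n-3}. -/

import Mathlib

open SimpleGraph Finset

section Aux

variable {V : Type} [Fintype V] [DecidableEq V]

omit [Fintype V] [DecidableEq V] in
lemma aux_closed_reach {T : SimpleGraph V} {s : Set V} (hs : ∀ x ∈ s, ∀ y, T.Adj x y → y ∈ s)
    {a z : V} (ha : a ∈ s) (h : T.Reachable a z) : z ∈ s := by
  obtain ⟨p⟩ := h
  induction p with
  | nil => exact ha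
  | cons h q ih => exact ih (hs _ ha _ h)

omit [DecidableEq V] in
lemma aux_deg_pos {T : SimpleGraph V} [DecidableRel T.Adj] (hconn : T.Connected)
    (hcard : 2 ≤ Fintype.card V) (v : V) : 0 < T.degree v := by
  obtain ⟨w, hw⟩ := Fintype.exists_ne_of_one_lt_card (by omega) v
  obtain ⟨p⟩ := hconn v w
  cases p with
  | nil => exact absurd rfl hw.symm
  | cons h q =>
    rw [← SimpleGraph.card_neighborFinset_eq_degree]
    exact Finset.card_pos.2 ⟨_, (SimpleGraph.mem_neighborFinset ..).2 h⟩

omit [DecidableEq V] in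
lemma aux_sum_deg {T : SimpleGraph V} [DecidableRel T.Adj] (hconn : T.Connected)
    (hacyc : T.IsAcyclic) : ∑ v, T.degree v = 2 * (Fintype.card V - 1) := by
  rw [SimpleGraph.sum_degrees_eq_twice_card_edges]
  have := SimpleGraph.IsTree.card_edgeFinset ⟨hconn, hacyc⟩
  omega

omit [DecidableEq V] in
lemma aux_leaf_nbr {T : SimpleGraph V} [DecidableRel T.Adj] {v c z : V} (hv : T.degree v = 1)
    (hc : T.Adj c v) (hz : T.Adj z v) : z = c := by
  have hcard : (T.neighborFinset v).card ≤ 1 := by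
    rw [T.card_neighborFinset_eq_degree v, hv]
  exact Finset.card_le_one.1 hcard z ((SimpleGraph.mem_neighborFinset ..).2 hz.symm)
    c ((SimpleGraph.mem_neighborFinset ..).2 hc.symm)

lemma aux_leaf_nbr_internal {T : SimpleGraph V} [DecidableRel T.Adj] (hconn : T.Connected)
    (hcard : 3 ≤ Fintype.card V) {u w : V} (hu : T.degree u = 1) (huw : T.Adj u w) :
    2 ≤ T.degree w := by
  by_contra h
  push_neg at h
  have hw : T.degree w = 1 := by
    have : 0 < T.degree w := (T.degree_pos_iff_exists_adj w).2 ⟨u, huw.symm⟩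
    omega
  obtain ⟨z, hz⟩ : ∃ z : V, z ∉ ({u, w} : Set V) := by
    by_contra hcon
    push_neg at hcon
    have hsub : (univ : Finset V) ⊆ {u, w} := fun x _ => by
      have := hcon x; simp at this ⊢; tauto
    have := Finset.card_le_card hsub
    simp only [Finset.card_univ] at this
    have h2 : ({u, w} : Finset V).card ≤ 2 :=
      (Finset.card_insert_le _ _).trans (by simp)
    omega
  apply hz
  refine aux_closed_reach (T := T) (s := {u, w}) ?_ (by simp) (hconn u z)
  rintro x (rfl | rfl) y hy
  · right; exact aux_leaf_nbr hu huw.symm hy.symm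
  · left; exact aux_leaf_nbr hw huw hy.symm

lemma aux_sdiff_pair_right {u v : V} {s : Finset V} (hv : v ∉ s) : s \ {u, v} = s \ {u} := by
  ext x
  simp only [Finset.mem_sdiff, Finset.mem_insert, Finset.mem_singleton]
  constructor
  · rintro ⟨h1, h2⟩; exact ⟨h1, fun h => h2 (Or.inl h)⟩
  · rintro ⟨h1, h2⟩
    refine ⟨h1, ?_⟩
    rintro (rfl | rfl)
    · exact h2 rfl
    · exact hv h1

lemma aux_sdiff_pair_none {u v : V} {s : Finset V} (hu : u ∉ s) (hv : v ∉ s) :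
    s \ {u, v} = s := by
  ext x
  simp only [Finset.mem_sdiff, Finset.mem_insert, Finset.mem_singleton]
  constructor
  · rintro ⟨h1, _⟩; exact h1
  · intro h1
    refine ⟨h1, ?_⟩
    rintro (rfl | rfl)
    · exact hu h1
    · exact hv h1

lemma aux_star_iso {n : ℕ}
    (hV : Fintype.card V = n) (T : SimpleGraph V) [DecidableRel T.Adj] (c : V)
    (hAdj : ∀ x y, T.Adj x y ↔ (x = c ∧ y ≠ c) ∨ (x ≠ c ∧ y = c)) :
    Nonempty (T ≃g completeBipartiteGraph (Fin 1) (Fin (n - 1))) := by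
  have h1 : Fintype.card {x : V // x = c} = 1 := Fintype.card_subtype_eq c
  have h2 : Fintype.card {x : V // ¬ x = c} = n - 1 := by
    rw [Fintype.card_subtype_compl, h1, hV]
  let e : V ≃ Fin 1 ⊕ Fin (n - 1) :=
    (Equiv.sumCompl (· = c)).symm.trans
      (Equiv.sumCongr (Fintype.equivFinOfCardEq h1) (Fintype.equivFinOfCardEq h2))
  have he : ∀ x : V, (e x).isLeft = true ↔ x = c := by
    intro x
    by_cases hx : x = c
    · simp [e, Equiv.sumCompl_symm_apply_of_pos hx, hx]
    · simp [e, Equiv.sumCompl_symm_apply_of_neg hx, hx]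
  refine ⟨⟨e, ?_⟩⟩
  intro x y
  rw [completeBipartiteGraph_adj, hAdj]
  have hx := (he x).symm; have hy := (he y).symm
  rcases hx' : e x with a | a <;> rcases hy' : e y with b | b <;>
    rw [hx'] at hx <;> rw [hy'] at hy <;>
    simp only [Sum.isLeft, Sum.isRight] <;> simp_all

lemma aux_no_iso (T : SimpleGraph V) [DecidableRel T.Adj] {m : ℕ}
    (u v a b c d : V)
    (hau : a ≠ u) (hav : a ≠ v) (hbu : b ≠ u) (hbv : b ≠ v)
    (hcu : c ≠ u) (hcv : c ≠ v) (hdu : d ≠ u) (hdv : d ≠ v)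
    (hac : a ≠ c) (had : a ≠ d) (hbc : b ≠ c) (hbd : b ≠ d)
    (h1 : T.Adj a b) (h2 : T.Adj c d) :
    ¬ Nonempty ((T.induce ({u, v}ᶜ : Set V)) ≃g
      completeBipartiteGraph (Fin 1) (Fin m)) := by
  rintro ⟨f⟩
  have hmem : ∀ z : V, z ≠ u → z ≠ v → z ∈ ({u, v}ᶜ : Set V) := by
    intro z h1 h2; simp [h1, h2]
  set A : ({u, v}ᶜ : Set V) := ⟨a, hmem a hau hav⟩
  set B : ({u, v}ᶜ : Set V) := ⟨b, hmem b hbu hbv⟩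
  set C : ({u, v}ᶜ : Set V) := ⟨c, hmem c hcu hcv⟩
  set D : ({u, v}ᶜ : Set V) := ⟨d, hmem d hdu hdv⟩
  have key : ∀ z : Fin 1 ⊕ Fin m, z.isLeft = true → z = Sum.inl 0 := by
    rintro (z | z) h
    · exact congrArg Sum.inl (Subsingleton.elim z 0)
    · simp at h
  have e1 : (completeBipartiteGraph (Fin 1) (Fin m)).Adj (f A) (f B) :=
    f.map_rel_iff.2 h1
  have e2 : (completeBipartiteGraph (Fin 1) (Fin m)).Adj (f C) (f D) :=
    f.map_rel_iff.2 h2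
  rw [completeBipartiteGraph_adj] at e1 e2
  have hAB : f A = Sum.inl 0 ∨ f B = Sum.inl 0 := by
    rcases e1 with ⟨h, _⟩ | ⟨_, h⟩
    · exact Or.inl (key _ h)
    · exact Or.inr (key _ h)
  have hCD : f C = Sum.inl 0 ∨ f D = Sum.inl 0 := by
    rcases e2 with ⟨h, _⟩ | ⟨_, h⟩
    · exact Or.inl (key _ h)
    · exact Or.inr (key _ h)
  rcases hAB with h | h <;> rcases hCD with h' | h'
  · exact hac (congrArg Subtype.val (f.injective (h.trans h'.symm)))
  · exact had (congrArg Subtype.val (f.injective (h.trans h'.symm)))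
  · exact hbc (congrArg Subtype.val (f.injective (h.trans h'.symm)))
  · exact hbd (congrArg Subtype.val (f.injective (h.trans h'.symm)))

lemma aux_main_step (T : SimpleGraph V) [DecidableRel T.Adj] (hacyc : T.IsAcyclic) {m : ℕ}
    (u v b c : V) (hbc : b ≠ c)
    (hu : T.degree u = 1) (hv : T.degree v = 1)
    (hb : 2 ≤ (T.neighborFinset b \ {u, v}).card)
    (hc : 2 ≤ (T.neighborFinset c \ {u, v}).card) :
    ¬ Nonempty ((T.induce ({u, v}ᶜ : Set V)) ≃g
      completeBipartiteGraph (Fin 1) (Fin m)) := by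
  have hdegb : 2 ≤ T.degree b := by
    calc 2 ≤ (T.neighborFinset b \ {u, v}).card := hb
    _ ≤ (T.neighborFinset b).card := Finset.card_le_card (Finset.sdiff_subset)
    _ = T.degree b := T.card_neighborFinset_eq_degree b
  have hdegc : 2 ≤ T.degree c := by
    calc 2 ≤ (T.neighborFinset c \ {u, v}).card := hc
    _ ≤ (T.neighborFinset c).card := Finset.card_le_card (Finset.sdiff_subset)
    _ = T.degree c := T.card_neighborFinset_eq_degree c
  have hbu : b ≠ u := fun h => by rw [h, hu] at hdegb; omega
  have hbv : b ≠ v := fun h => by rw [h, hv] at hdegb; omega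
  have hcu : c ≠ u := fun h => by rw [h, hu] at hdegc; omega
  have hcv : c ≠ v := fun h => by rw [h, hv] at hdegc; omega
  by_cases hadj : T.Adj b c
  · obtain ⟨x, hx⟩ := Finset.card_pos.1 (show 0 < ((T.neighborFinset b \ {u, v}).erase c).card by
      have := Finset.pred_card_le_card_erase (a := c) (s := T.neighborFinset b \ {u, v}); omega)
    obtain ⟨y, hy⟩ := Finset.card_pos.1 (show 0 < ((T.neighborFinset c \ {u, v}).erase b).card by
      have := Finset.pred_card_le_card_erase (a := b) (s := T.neighborFinset c \ {u, v}); omega)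
    have hxc : x ≠ c := Finset.ne_of_mem_erase hx
    have hyb : y ≠ b := Finset.ne_of_mem_erase hy
    have hx' := Finset.mem_of_mem_erase hx
    have hy' := Finset.mem_of_mem_erase hy
    rw [Finset.mem_sdiff] at hx' hy'
    have hbx : T.Adj b x := (SimpleGraph.mem_neighborFinset ..).1 hx'.1
    have hcy : T.Adj c y := (SimpleGraph.mem_neighborFinset ..).1 hy'.1
    have hxu : x ≠ u := fun h => hx'.2 (by simp [h])
    have hxv : x ≠ v := fun h => hx'.2 (by simp [h])
    have hyu : y ≠ u := fun h => hy'.2 (by simp [h])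
    have hyv : y ≠ v := fun h => hy'.2 (by simp [h])
    have hxy : x ≠ y := by
      rintro rfl
      have heq := hacyc.path_unique (SimpleGraph.Path.singleton hbx)
        ⟨SimpleGraph.Walk.cons hadj (SimpleGraph.Walk.cons hcy SimpleGraph.Walk.nil), by
          rw [SimpleGraph.Walk.isPath_def]
          simp [hadj.ne, hbx.ne, hcy.ne]⟩
      have hlen := congrArg (fun p => p.1.length) heq
      simp [SimpleGraph.Path.singleton] at hlen
    exact aux_no_iso T u v b x c y hbu hbv hxu hxv hcu hcv hyu hyv hbc hyb.symm hxc hxy hbx hcy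
  · obtain ⟨x, hx'⟩ := Finset.card_pos.1 (show 0 < (T.neighborFinset b \ {u, v}).card by omega)
    obtain ⟨y, hy⟩ := Finset.card_pos.1 (show 0 < ((T.neighborFinset c \ {u, v}).erase x).card by
      have := Finset.pred_card_le_card_erase (a := x) (s := T.neighborFinset c \ {u, v}); omega)
    have hxy : x ≠ y := (Finset.ne_of_mem_erase hy).symm
    have hy' := Finset.mem_of_mem_erase hy
    rw [Finset.mem_sdiff] at hx' hy'
    have hbx : T.Adj b x := (SimpleGraph.mem_neighborFinset ..).1 hx'.1
    have hcy : T.Adj c y := (SimpleGraph.mem_neighborFinset ..).1 hy'.1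
    have hxu : x ≠ u := fun h => hx'.2 (by simp [h])
    have hxv : x ≠ v := fun h => hx'.2 (by simp [h])
    have hyu : y ≠ u := fun h => hy'.2 (by simp [h])
    have hyv : y ≠ v := fun h => hy'.2 (by simp [h])
    have hxc : x ≠ c := fun h => hadj (h ▸ hbx)
    have hyb : y ≠ b := fun h => hadj (h ▸ hcy).symm
    exact aux_no_iso T u v b x c y hbu hbv hxu hxv hcu hcv hyu hyv hbc hyb.symm hxc hxy hbx hcy

end Aux

theorem stmt_5 {V : Type} [Fintype V] [DecidableEq V] {n : ℕ} (hn : 6 ≤ n)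
    (hV : Fintype.card V = n)
    (T : SimpleGraph V) [DecidableRel T.Adj]
    (hconn : T.Connected) (hacyc : T.IsAcyclic)
    (hstar : ¬ Nonempty (T ≃g completeBipartiteGraph (Fin 1) (Fin (n - 1)))) :
    ∃ u v : V, u ≠ v ∧ T.degree u = 1 ∧ T.degree v = 1 ∧
      ¬ Nonempty ((T.induce ({u, v}ᶜ : Set V)) ≃g
        completeBipartiteGraph (Fin 1) (Fin (n - 3))) := by
  classical
  have hn3 : 3 ≤ Fintype.card V := by omega
  have hdegpos : ∀ w, 0 < T.degree w := aux_deg_pos hconn (by omega)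
  have hNcard : ∀ w, (T.neighborFinset w).card = T.degree w :=
    fun w => T.card_neighborFinset_eq_degree w
  have hsum : ∑ w, T.degree w = 2 * (n - 1) := by rw [aux_sum_deg hconn hacyc, hV]
  set I := univ.filter (fun w => 2 ≤ T.degree w) with hIdef
  set L := univ.filter (fun w => T.degree w = 1) with hLdef
  have hmemI : ∀ w, w ∈ I ↔ 2 ≤ T.degree w := fun w => by simp [hIdef]
  have hmemL : ∀ w, w ∈ L ↔ T.degree w = 1 := fun w => by simp [hLdef]
  have hfilter : univ.filter (fun w => ¬ 2 ≤ T.degree w) = L := by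
    refine Finset.filter_congr (fun x _ => ?_)
    have := hdegpos x
    constructor <;> omega
  have hsplit : ∑ w ∈ I, T.degree w + ∑ w ∈ L, T.degree w = 2 * (n - 1) := by
    rw [← hsum, ← Finset.sum_filter_add_sum_filter_not univ (fun w => 2 ≤ T.degree w)
      (fun w => T.degree w), hfilter]
  have hsumL : ∑ w ∈ L, T.degree w = L.card := by
    rw [Finset.sum_congr rfl (fun w hw => (hmemL w).1 hw), Finset.sum_const, smul_eq_mul, mul_one]
  have hcards : I.card + L.card = n := by
    rw [← hV, ← Finset.card_univ,
      ← Finset.card_filter_add_card_filter_not (s := (univ : Finset V))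
        (p := fun w => 2 ≤ T.degree w), hfilter]
  have hsumI : ∑ w ∈ I, T.degree w = n - 2 + I.card := by omega
  have hIlb : ∀ w ∈ I, 2 ≤ T.degree w := fun w hw => (hmemI w).1 hw
  have h2I : 2 * I.card ≤ ∑ w ∈ I, T.degree w := by
    calc 2 * I.card = ∑ _w ∈ I, 2 := by rw [Finset.sum_const, smul_eq_mul, mul_comm]
    _ ≤ ∑ w ∈ I, T.degree w := Finset.sum_le_sum hIlb
  have hL2 : 2 ≤ L.card := by omega
  by_cases h4 : 4 ≤ I.card
  · -- many internal vertices: any two leaves work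
    obtain ⟨u, huL, v, hvL, huv⟩ := Finset.one_lt_card.1 (show 1 < L.card by omega)
    have hulf : T.degree u = 1 := (hmemL u).1 huL
    have hvlf : T.degree v = 1 := (hmemL v).1 hvL
    obtain ⟨wu, hwu⟩ := Finset.card_eq_one.1 (show (T.neighborFinset u).card = 1 by
      rw [hNcard]; exact hulf)
    obtain ⟨wv, hwv⟩ := Finset.card_eq_one.1 (show (T.neighborFinset v).card = 1 by
      rw [hNcard]; exact hvlf)
    have hscard : 2 ≤ (I \ {wu, wv}).card := by
      have h1 := Finset.le_card_sdiff ({wu, wv} : Finset V) I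
      have hpair : ({wu, wv} : Finset V).card ≤ 2 :=
        (Finset.card_insert_le _ _).trans (by simp)
      omega
    obtain ⟨b, hb', c, hc', hbc⟩ := Finset.one_lt_card.1 (show 1 < (I \ {wu, wv}).card by omega)
    rw [Finset.mem_sdiff] at hb' hc'
    have hnobound : ∀ z, z ∈ I \ {wu, wv} → 2 ≤ (T.neighborFinset z \ {u, v}).card := by
      intro z hz
      rw [Finset.mem_sdiff] at hz
      have hzu : u ∉ T.neighborFinset z := by
        intro hmem
        have : z ∈ T.neighborFinset u :=
          (SimpleGraph.mem_neighborFinset ..).2 ((SimpleGraph.mem_neighborFinset ..).1 hmem).symm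
        rw [hwu] at this
        simp at this
        exact hz.2 (by simp [this])
      have hzv : v ∉ T.neighborFinset z := by
        intro hmem
        have : z ∈ T.neighborFinset v :=
          (SimpleGraph.mem_neighborFinset ..).2 ((SimpleGraph.mem_neighborFinset ..).1 hmem).symm
        rw [hwv] at this
        simp at this
        exact hz.2 (by simp [this])
      rw [aux_sdiff_pair_none hzu hzv, hNcard]
      exact hIlb z hz.1
    exact ⟨u, v, huv, hulf, hvlf, aux_main_step T hacyc u v b c hbc hulf hvlf
      (hnobound b (Finset.mem_sdiff.2 hb')) (hnobound c (Finset.mem_sdiff.2 hc'))⟩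
  · by_cases h3 : I.card = 3
    · -- three internal vertices
      have hLcard : L.card = n - 3 := by omega
      have hLsub : L ⊆ I.biUnion (fun x => T.neighborFinset x ∩ L) := by
        intro w hw
        have hwdeg : T.degree w = 1 := (hmemL w).1 hw
        obtain ⟨z, hz⟩ := Finset.card_pos.1 (show 0 < (T.neighborFinset w).card by
          rw [hNcard]; omega)
        have hadjwz : T.Adj w z := (SimpleGraph.mem_neighborFinset ..).1 hz
        have hz2 : 2 ≤ T.degree z := aux_leaf_nbr_internal hconn hn3 hwdeg hadjwz
        exact Finset.mem_biUnion.2 ⟨z, (hmemI z).2 hz2,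
          Finset.mem_inter.2 ⟨(SimpleGraph.mem_neighborFinset ..).2 hadjwz.symm, hw⟩⟩
      have hLle : L.card ≤ ∑ x ∈ I, (T.neighborFinset x ∩ L).card :=
        (Finset.card_le_card hLsub).trans Finset.card_biUnion_le
      by_cases hp : ∃ p ∈ I, 2 ≤ (T.neighborFinset p ∩ L).card
      · obtain ⟨p, hpI, hp2⟩ := hp
        obtain ⟨u, hu', v, hv', huv⟩ := Finset.one_lt_card.1 (show 1 < (T.neighborFinset p ∩ L).card by omega)
        rw [Finset.mem_inter] at hu' hv'
        have hpu : T.Adj p u := (SimpleGraph.mem_neighborFinset ..).1 hu'.1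
        have hpv : T.Adj p v := (SimpleGraph.mem_neighborFinset ..).1 hv'.1
        have hulf : T.degree u = 1 := (hmemL u).1 hu'.2
        have hvlf : T.degree v = 1 := (hmemL v).1 hv'.2
        obtain ⟨q, r, hqr, herase⟩ := Finset.card_eq_two.1 (show (I.erase p).card = 2 by
          rw [Finset.card_erase_of_mem hpI]; omega)
        have hqmem : q ∈ I.erase p := herase ▸ (by simp)
        have hrmem : r ∈ I.erase p := herase ▸ (by simp)
        have hbound : ∀ z, z ∈ I.erase p → 2 ≤ (T.neighborFinset z \ {u, v}).card := by
          intro z hz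
          have hzp : z ≠ p := Finset.ne_of_mem_erase hz
          have hzu : u ∉ T.neighborFinset z := fun hmem =>
            hzp (aux_leaf_nbr hulf hpu ((SimpleGraph.mem_neighborFinset ..).1 hmem))
          have hzv : v ∉ T.neighborFinset z := fun hmem =>
            hzp (aux_leaf_nbr hvlf hpv ((SimpleGraph.mem_neighborFinset ..).1 hmem))
          rw [aux_sdiff_pair_none hzu hzv, hNcard]
          exact hIlb z (Finset.mem_of_mem_erase hz)
        exact ⟨u, v, huv, hulf, hvlf, aux_main_step T hacyc u v q r hqr hulf hvlf
          (hbound q hqmem) (hbound r hrmem)⟩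
      · push_neg at hp
        have hsum3 : ∑ x ∈ I, (T.neighborFinset x ∩ L).card ≤ 3 := by
          calc ∑ x ∈ I, (T.neighborFinset x ∩ L).card ≤ ∑ _x ∈ I, 1 :=
            Finset.sum_le_sum (fun x hx => by have := hp x hx; omega)
          _ = I.card := by rw [Finset.sum_const, smul_eq_mul, mul_one]
          _ = 3 := h3
        have hn6 : n = 6 := by omega
        have hall1 : ∀ x ∈ I, 1 ≤ (T.neighborFinset x ∩ L).card := by
          intro x hx
          by_contra h0
          push_neg at h0
          have h1 : ∑ y ∈ I.erase x, (T.neighborFinset y ∩ L).card ≤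
              ∑ _y ∈ I.erase x, 1 :=
            Finset.sum_le_sum (fun y hy => by
              have := hp y (Finset.mem_of_mem_erase hy); omega)
          rw [Finset.sum_const, smul_eq_mul, mul_one, Finset.card_erase_of_mem hx, h3] at h1
          have h2 : (T.neighborFinset x ∩ L).card +
              ∑ y ∈ I.erase x, (T.neighborFinset y ∩ L).card =
              ∑ y ∈ I, (T.neighborFinset y ∩ L).card :=
            Finset.add_sum_erase I (fun y => (T.neighborFinset y ∩ L).card) hx
          omega
        obtain ⟨p, q, r, hpq, hpr, hqr, hIeq⟩ := Finset.card_eq_three.1 h3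
        have hpI : p ∈ I := hIeq ▸ (by simp)
        have hqI : q ∈ I := hIeq ▸ (by simp)
        have hrI : r ∈ I := hIeq ▸ (by simp)
        have hsumdeg : T.degree p + T.degree q + T.degree r = 7 := by
          rw [hIeq, Finset.sum_insert (by simp [hpq, hpr]),
            Finset.sum_insert (by simp [hqr]), Finset.sum_singleton] at hsumI
          have hcard3 : ({p, q, r} : Finset V).card = 3 := by rw [← hIeq]; exact h3
          omega
        have key3 : ∀ a b c : V, a ≠ b → a ≠ c → b ≠ c → a ∈ I → b ∈ I → c ∈ I →
            3 ≤ T.degree a →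
            ∃ u v : V, u ≠ v ∧ T.degree u = 1 ∧ T.degree v = 1 ∧
              ¬ Nonempty ((T.induce ({u, v}ᶜ : Set V)) ≃g
                completeBipartiteGraph (Fin 1) (Fin (n - 3))) := by
          intro a b c hab hac hbc haI hbI hcI ha3
          obtain ⟨u, hu'⟩ := Finset.card_pos.1 (show 0 < (T.neighborFinset a ∩ L).card by
            have := hall1 a haI; omega)
          obtain ⟨v, hv'⟩ := Finset.card_pos.1 (show 0 < (T.neighborFinset b ∩ L).card by
            have := hall1 b hbI; omega)
          rw [Finset.mem_inter] at hu' hv'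
          have hau : T.Adj a u := (SimpleGraph.mem_neighborFinset ..).1 hu'.1
          have hbv : T.Adj b v := (SimpleGraph.mem_neighborFinset ..).1 hv'.1
          have hulf : T.degree u = 1 := (hmemL u).1 hu'.2
          have hvlf : T.degree v = 1 := (hmemL v).1 hv'.2
          have huv : u ≠ v := by
            rintro rfl
            exact hab (aux_leaf_nbr hulf hau hbv).symm
          have hva : v ∉ T.neighborFinset a := fun hmem =>
            hab (aux_leaf_nbr hvlf hbv ((SimpleGraph.mem_neighborFinset ..).1 hmem))
          have hbnda : 2 ≤ (T.neighborFinset a \ {u, v}).card := by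
            rw [aux_sdiff_pair_right hva, ← Finset.erase_eq]
            have := Finset.pred_card_le_card_erase (a := u) (s := T.neighborFinset a)
            have := hNcard a
            omega
          have huc : u ∉ T.neighborFinset c := fun hmem =>
            hac.symm (aux_leaf_nbr hulf hau ((SimpleGraph.mem_neighborFinset ..).1 hmem))
          have hvc : v ∉ T.neighborFinset c := fun hmem =>
            hbc.symm (aux_leaf_nbr hvlf hbv ((SimpleGraph.mem_neighborFinset ..).1 hmem))
          have hbndc : 2 ≤ (T.neighborFinset c \ {u, v}).card := by
            rw [aux_sdiff_pair_none huc hvc, hNcard]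
            exact hIlb c hcI
          exact ⟨u, v, huv, hulf, hvlf, aux_main_step T hacyc u v a c hac hulf hvlf hbnda hbndc⟩
        have hdp := hIlb p hpI
        have hdq := hIlb q hqI
        have hdr := hIlb r hrI
        by_cases hgp : 3 ≤ T.degree p
        · exact key3 p q r hpq hpr hqr hpI hqI hrI hgp
        · by_cases hgq : 3 ≤ T.degree q
          · exact key3 q p r hpq.symm hqr hpr hqI hpI hrI hgq
          · exact key3 r p q hpr.symm hqr.symm hpq hrI hpI hqI (by omega)
    · by_cases h2 : I.card = 2
      · -- double star case
        obtain ⟨b, c, hbc, hIeq⟩ := Finset.card_eq_two.1 h2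
        have hbI : b ∈ I := hIeq ▸ (by simp)
        have hcI : c ∈ I := hIeq ▸ (by simp)
        have hdb : 2 ≤ T.degree b := hIlb b hbI
        have hdc : 2 ≤ T.degree c := hIlb c hcI
        have hsum2 : T.degree b + T.degree c = n := by
          rw [hIeq, Finset.sum_pair hbc] at hsumI
          have hcard2 : ({b, c} : Finset V).card = 2 := by rw [← hIeq]; exact h2
          omega
        have hleaf : ∀ x, x ≠ b → x ≠ c → T.degree x = 1 := by
          intro x h1 h2'
          have hx : x ∉ I := by rw [hIeq]; simp [h1, h2']
          have hx' : ¬ 2 ≤ T.degree x := fun hh => hx ((hmemI x).2 hh)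
          have := hdegpos x
          omega
        have key : ∀ p q : V, p ≠ q → 2 ≤ T.degree p → 2 ≤ T.degree q →
            T.degree p + T.degree q = n →
            (∀ x, x ≠ p → x ≠ q → T.degree x = 1) → T.degree q ≤ T.degree p →
            ∃ u v : V, u ≠ v ∧ T.degree u = 1 ∧ T.degree v = 1 ∧
              ¬ Nonempty ((T.induce ({u, v}ᶜ : Set V)) ≃g
                completeBipartiteGraph (Fin 1) (Fin (n - 3))) := by
          intro p q hpq hdp hdq hsumpq hlf hle
          have hdp3 : 3 ≤ T.degree p := by omega
          by_cases hq3 : 3 ≤ T.degree q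
          · obtain ⟨u, hu'⟩ := Finset.card_pos.1
              (show 0 < ((T.neighborFinset p).erase q).card by
                have := Finset.pred_card_le_card_erase (a := q) (s := T.neighborFinset p)
                have := hNcard p; omega)
            obtain ⟨v, hv'⟩ := Finset.card_pos.1
              (show 0 < ((T.neighborFinset q).erase p).card by
                have := Finset.pred_card_le_card_erase (a := p) (s := T.neighborFinset q)
                have := hNcard q; omega)
            have huq : u ≠ q := Finset.ne_of_mem_erase hu'
            have hvp : v ≠ p := Finset.ne_of_mem_erase hv'
            have hpu : T.Adj p u :=
              (SimpleGraph.mem_neighborFinset ..).1 (Finset.mem_of_mem_erase hu')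
            have hqv : T.Adj q v :=
              (SimpleGraph.mem_neighborFinset ..).1 (Finset.mem_of_mem_erase hv')
            have hulf : T.degree u = 1 := hlf u hpu.ne' huq
            have hvlf : T.degree v = 1 := hlf v hvp hqv.ne'
            have huv : u ≠ v := by
              rintro rfl
              exact hpq (aux_leaf_nbr hulf hpu hqv).symm
            have hvp' : v ∉ T.neighborFinset p := fun hmem =>
              hpq (aux_leaf_nbr hvlf hqv ((SimpleGraph.mem_neighborFinset ..).1 hmem))
            have hup' : u ∉ T.neighborFinset q := fun hmem =>
              hpq (aux_leaf_nbr hulf hpu ((SimpleGraph.mem_neighborFinset ..).1 hmem)).symm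
            have hbp : 2 ≤ (T.neighborFinset p \ {u, v}).card := by
              rw [aux_sdiff_pair_right hvp', ← Finset.erase_eq]
              have := Finset.pred_card_le_card_erase (a := u) (s := T.neighborFinset p)
              have := hNcard p
              omega
            have hbq : 2 ≤ (T.neighborFinset q \ {u, v}).card := by
              rw [Finset.pair_comm, aux_sdiff_pair_right hup', ← Finset.erase_eq]
              have := Finset.pred_card_le_card_erase (a := v) (s := T.neighborFinset q)
              have := hNcard q
              omega
            exact ⟨u, v, huv, hulf, hvlf, aux_main_step T hacyc u v p q hpq hulf hvlf hbp hbq⟩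
          · have hdq2 : T.degree q = 2 := by omega
            have hdp4 : 4 ≤ T.degree p := by omega
            obtain ⟨u, hu', v, hv', huv⟩ := Finset.one_lt_card.1
              (show 1 < ((T.neighborFinset p).erase q).card by
                have := Finset.pred_card_le_card_erase (a := q) (s := T.neighborFinset p)
                have := hNcard p; omega)
            have huq : u ≠ q := Finset.ne_of_mem_erase hu'
            have hvq : v ≠ q := Finset.ne_of_mem_erase hv'
            have hpu : T.Adj p u :=
              (SimpleGraph.mem_neighborFinset ..).1 (Finset.mem_of_mem_erase hu')
            have hpv : T.Adj p v :=
              (SimpleGraph.mem_neighborFinset ..).1 (Finset.mem_of_mem_erase hv')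
            have hulf : T.degree u = 1 := hlf u hpu.ne' huq
            have hvlf : T.degree v = 1 := hlf v hpv.ne' hvq
            have hbp : 2 ≤ (T.neighborFinset p \ {u, v}).card := by
              have h1 : ({u, v} : Finset V).card ≤ 2 :=
                (Finset.card_insert_le _ _).trans (by simp)
              have h2' := Finset.le_card_sdiff ({u, v} : Finset V) (T.neighborFinset p)
              have := hNcard p
              omega
            have hup' : u ∉ T.neighborFinset q := fun hmem =>
              hpq (aux_leaf_nbr hulf hpu ((SimpleGraph.mem_neighborFinset ..).1 hmem)).symm
            have hvp' : v ∉ T.neighborFinset q := fun hmem =>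
              hpq (aux_leaf_nbr hvlf hpv ((SimpleGraph.mem_neighborFinset ..).1 hmem)).symm
            have hbq : 2 ≤ (T.neighborFinset q \ {u, v}).card := by
              rw [aux_sdiff_pair_none hup' hvp', hNcard]
              exact hdq
            exact ⟨u, v, huv, hulf, hvlf, aux_main_step T hacyc u v p q hpq hulf hvlf hbp hbq⟩
        rcases le_total (T.degree c) (T.degree b) with hle | hle
        · exact key b c hbc hdb hdc hsum2 hleaf hle
        · exact key c b hbc.symm hdc hdb (by omega) (fun x h1' h2' => hleaf x h2' h1') hle
      · -- at most one internal vertex: T is a star, contradiction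
        exfalso
        have h1 : I.card = 1 := by
          have h0 : I.card ≠ 0 := by
            intro h0
            rw [Finset.card_eq_zero.1 h0] at hsumI
            simp only [Finset.sum_empty, Finset.card_empty] at hsumI
            omega
          omega
        obtain ⟨c, hc⟩ := Finset.card_eq_one.1 h1
        have hdegc : T.degree c = n - 1 := by
          rw [hc, Finset.sum_singleton, Finset.card_singleton] at hsumI
          omega
        have hNc : T.neighborFinset c = univ.erase c := by
          apply Finset.eq_of_subset_of_card_le
          · intro x hx
            exact Finset.mem_erase.2
              ⟨((SimpleGraph.mem_neighborFinset ..).1 hx).ne', Finset.mem_univ x⟩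
          · rw [Finset.card_erase_of_mem (Finset.mem_univ c), Finset.card_univ, hV,
              hNcard, hdegc]
        have hadjc : ∀ x, x ≠ c → T.Adj c x := by
          intro x hx
          have : x ∈ T.neighborFinset c := by
            rw [hNc]; exact Finset.mem_erase.2 ⟨hx, Finset.mem_univ x⟩
          exact (SimpleGraph.mem_neighborFinset ..).1 this
        have hdeg1 : ∀ x, x ≠ c → T.degree x = 1 := by
          intro x hx
          have hxI : x ∉ I := fun hmem => hx (by
            have := hc ▸ hmem
            simpa using this)
          have hx' : ¬ 2 ≤ T.degree x := fun hh => hxI ((hmemI x).2 hh)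
          have := hdegpos x
          omega
        apply hstar
        apply aux_star_iso hV T c
        intro x y
        constructor
        · intro hxy
          by_cases hx : x = c
          · exact Or.inl ⟨hx, (hx ▸ hxy).ne'⟩
          · exact Or.inr ⟨hx, aux_leaf_nbr (hdeg1 x hx) (hadjc x hx) hxy.symm⟩
        · rintro (⟨rfl, hy⟩ | ⟨hx, rfl⟩)
          · exact hadjc y hy
          · exact (hadjc x hx).symm
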